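/- Let Q be a real symmetric positive semidefinite n×n matrix with ker(Q) = span(1), n ≥ 2. Define ζ := diagvec(Q†) and the resistance matrix Ω := 1ζᵀ + ζ1ᵀ − 2Q†. Then Ω is invertible and has exactly one positive eigenvalue and n−1 negative eigenvalues. -/

import Mathlib

open Matrix Classical
set_option maxHeartbeats 1000000

/-- The Moore–Penrose pseudoinverse of a real matrix, defined via its four
characterizing Penrose equations (which have a unique solution). -/
noncomputable def pinv {m k : Type*} [Fintype m] [Fintype k]
    (A : Matrix m k ℝ) : Matrix k m ℝ :=
  if h : ∃ X : Matrix k m ℝ,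
      A * X * A = A ∧ X * A * X = X ∧ (A * X)ᵀ = A * X ∧ (X * A)ᵀ = X * A
  then h.choose else 0

lemma penrose_unique {n : ℕ} (A X Y : Matrix (Fin n) (Fin n) ℝ)
    (h1X : A * X * A = A) (h2X : X * A * X = X) (h3X : (A * X)ᵀ = A * X) (h4X : (X * A)ᵀ = X * A)
    (h1Y : A * Y * A = A) (h2Y : Y * A * Y = Y) (h3Y : (A * Y)ᵀ = A * Y) (h4Y : (Y * A)ᵀ = Y * A) :
    X = Y := by
  have hAt1 : Aᵀ = Aᵀ * (A * Y) := by
    conv_lhs => rw [← h1Y]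
    rw [transpose_mul, h3Y]
  have hAt2 : Aᵀ = (Y * A) * Aᵀ := by
    conv_lhs => rw [← h1Y, mul_assoc]
    rw [transpose_mul, h4Y]
  have hAX : A * X = A * Y := by
    calc A * X = (A * X)ᵀ := h3X.symm
    _ = Xᵀ * Aᵀ := by rw [transpose_mul]
    _ = Xᵀ * (Aᵀ * (A * Y)) := by rw [← hAt1]
    _ = (Xᵀ * Aᵀ) * (A * Y) := by rw [mul_assoc]
    _ = (A * X) * (A * Y) := by rw [← transpose_mul, h3X]
    _ = (A * X * A) * Y := by simp only [mul_assoc]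
    _ = A * Y := by rw [h1X]
  have hXA : X * A = Y * A := by
    calc X * A = (X * A)ᵀ := h4X.symm
    _ = Aᵀ * Xᵀ := by rw [transpose_mul]
    _ = ((Y * A) * Aᵀ) * Xᵀ := by rw [← hAt2]
    _ = (Y * A) * (Aᵀ * Xᵀ) := by rw [mul_assoc]
    _ = (Y * A) * (X * A) := by rw [← transpose_mul, h4X]
    _ = Y * (A * X * A) := by simp only [mul_assoc]
    _ = Y * A := by rw [h1X]
  calc X = X * A * X := h2X.symm
  _ = (Y * A) * X := by rw [hXA]
  _ = Y * (A * X) := by rw [mul_assoc]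
  _ = Y * A * Y := by rw [hAX, ← mul_assoc]
  _ = Y := h2Y

lemma sum_two_support {n : ℕ} (f : Fin n → ℝ) (i j : Fin n) (hij : i ≠ j)
    (h : ∀ k, k ≠ i → k ≠ j → f k = 0) : ∑ k, f k = f i + f j := by
  have hsub : ({i, j} : Finset (Fin n)) ⊆ Finset.univ := Finset.subset_univ _
  rw [← Finset.sum_subset hsub (fun k _ hk => by
    simp only [Finset.mem_insert, Finset.mem_singleton] at hk
    push_neg at hk
    exact h k hk.1 hk.2)]
  exact Finset.sum_pair hij

theorem resistance_matrix_inertia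
    {n : ℕ} (hn : 2 ≤ n) (Q : Matrix (Fin n) (Fin n) ℝ)
    (hQ : Q.PosSemidef)
    (hker : ∀ v : Fin n → ℝ, Q.mulVec v = 0 ↔ ∃ c : ℝ, v = fun _ => c)
    (ζ : Fin n → ℝ) (hζ : ζ = fun i => pinv Q i i)
    (Ω : Matrix (Fin n) (Fin n) ℝ)
    (hΩ : Ω = Matrix.of (fun _ j => ζ j) + Matrix.of (fun i _ => ζ i) - 2 • pinv Q) :
    IsUnit Ω.det ∧
    ∀ hH : Ω.IsHermitian,
      (Finset.univ.filter fun i => 0 < hH.eigenvalues i).card = 1 ∧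
      (Finset.univ.filter fun i => hH.eigenvalues i < 0).card = n - 1 := by
  have hn0 : (n : ℝ) ≠ 0 := by positivity
  -- basic facts about Q
  have hQ1 : Q *ᵥ (fun _ => (1:ℝ)) = 0 := (hker _).mpr ⟨1, rfl⟩
  have hrow : ∀ i, ∑ k, Q i k = 0 := by
    intro i
    have := congrFun hQ1 i
    simpa [mulVec, dotProduct] using this
  have hQsymE : ∀ i j, Q i j = Q j i := by
    intro i j
    have := congrFun (congrFun hQ.1 j) i
    simpa [conjTranspose_apply] using this
  have hcol : ∀ j, ∑ k, Q k j = 0 := by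
    intro j
    calc ∑ k, Q k j = ∑ k, Q j k := by simp_rw [fun k => hQsymE k j]
    _ = 0 := hrow j
  -- the averaging matrix K and the matrix B = Q + K
  set K : Matrix (Fin n) (Fin n) ℝ := Matrix.of (fun _ _ => (n:ℝ)⁻¹) with hK
  have hQK : Q * K = 0 := by
    ext i j
    simp only [mul_apply, hK, of_apply, Matrix.zero_apply, ← Finset.sum_mul, hrow i, zero_mul]
  have hKQ : K * Q = 0 := by
    ext i j
    simp only [mul_apply, hK, of_apply, Matrix.zero_apply, ← Finset.mul_sum, hcol j, mul_zero]
  have hKK : K * K = K := by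
    ext i j
    simp only [mul_apply, hK, of_apply, Finset.sum_const, Finset.card_univ, Fintype.card_fin,
      nsmul_eq_mul]
    field_simp
  set B : Matrix (Fin n) (Fin n) ℝ := Q + K with hB
  have hQBK : Q = B - K := by rw [hB, add_sub_cancel_right]
  have hKmulVec : ∀ x : Fin n → ℝ, K *ᵥ x = fun _ => (n:ℝ)⁻¹ * ∑ j, x j := by
    intro x
    funext i
    simp [mulVec, dotProduct, hK, Finset.mul_sum]
  have hKquad : ∀ x : Fin n → ℝ, x ⬝ᵥ K *ᵥ x = (n:ℝ)⁻¹ * ((∑ j, x j) * (∑ j, x j)) := by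
    intro x
    rw [hKmulVec]
    simp only [dotProduct]
    rw [← Finset.sum_mul]
    ring
  have hKherm : K.IsHermitian := by
    ext i j
    simp [hK, conjTranspose_apply]
  have hBpd : B.PosDef := by
    refine posDef_iff_dotProduct_mulVec.mpr ⟨?_, ?_⟩
    · exact hQ.1.add hKherm
    · intro x hx
      have hstar : star x = x := by
        funext i; exact star_trivial _
      rw [hstar, hB, add_mulVec, dotProduct_add, hKquad]
      have hQx : 0 ≤ x ⬝ᵥ Q *ᵥ x := by
        have := hQ.dotProduct_mulVec_nonneg x
        rwa [hstar] at this
      rcases eq_or_ne (∑ j, x j) 0 with hs | hs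
      · rw [hs]
        simp only [mul_zero, zero_mul, add_zero]
        rcases lt_or_eq_of_le hQx with h | h
        · exact h
        · exfalso
          have hQx0 : Q *ᵥ x = 0 := by
            rw [← hQ.dotProduct_mulVec_zero_iff x, hstar]
            exact h.symm
          obtain ⟨c, hc⟩ := (hker x).mp hQx0
          have : ∑ j, x j = n * c := by simp [hc]
          rw [this] at hs
          have hc0 : c = 0 := by
            rcases mul_eq_zero.mp hs with h' | h'
            · exact absurd h' hn0
            · exact h'
          exact hx (by rw [hc, hc0]; rfl)
      · have hss : 0 < (∑ j, x j) * (∑ j, x j) := mul_self_pos.mpr hs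
        have hn' : 0 < (n:ℝ)⁻¹ := by positivity
        have := mul_pos hn' hss
        linarith
  have hBdet : IsUnit B.det := hBpd.det_pos.ne'.isUnit
  have hBBinv : B * B⁻¹ = 1 := mul_nonsing_inv B hBdet
  have hBinvB : B⁻¹ * B = 1 := nonsing_inv_mul B hBdet
  set X₀ : Matrix (Fin n) (Fin n) ℝ := B⁻¹ - K with hX₀
  -- key multiplication identities
  have hKB : K * B = K := by rw [hB, mul_add, hKQ, hKK, zero_add]
  have hBK : B * K = K := by rw [hB, add_mul, hQK, hKK, zero_add]
  have hKBinv : K * B⁻¹ = K := by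
    calc K * B⁻¹ = (K * B) * B⁻¹ := by rw [hKB]
    _ = K * (B * B⁻¹) := by rw [mul_assoc]
    _ = K := by rw [hBBinv, mul_one]
  have hBinvK : B⁻¹ * K = K := by
    calc B⁻¹ * K = B⁻¹ * (B * K) := by rw [hBK]
    _ = (B⁻¹ * B) * K := by rw [mul_assoc]
    _ = K := by rw [hBinvB, one_mul]
  have hQX : Q * X₀ = 1 - K := by
    rw [hX₀, mul_sub, hQK, sub_zero, hQBK, sub_mul, hBBinv, hKBinv]
  have hXQ : X₀ * Q = 1 - K := by
    rw [hX₀, sub_mul, hKQ, sub_zero, hQBK, mul_sub, hBinvB, hBinvK]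
  have hKX : K * X₀ = 0 := by rw [hX₀, mul_sub, hKBinv, hKK, sub_self]
  have hKt : Kᵀ = K := by ext i j; simp [hK]
  have e1 : Q * X₀ * Q = Q := by rw [hQX, sub_mul, one_mul, hKQ, sub_zero]
  have e2 : X₀ * Q * X₀ = X₀ := by rw [hXQ, sub_mul, one_mul, hKX, sub_zero]
  have e3 : (Q * X₀)ᵀ = Q * X₀ := by rw [hQX, transpose_sub, transpose_one, hKt]
  have e4 : (X₀ * Q)ᵀ = X₀ * Q := by rw [hXQ, transpose_sub, transpose_one, hKt]
  have hex : ∃ X : Matrix (Fin n) (Fin n) ℝ,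
      Q * X * Q = Q ∧ X * Q * X = X ∧ (Q * X)ᵀ = Q * X ∧ (X * Q)ᵀ = X * Q :=
    ⟨X₀, e1, e2, e3, e4⟩
  have hpinv : pinv Q = X₀ := by
    rw [pinv, dif_pos hex]
    obtain ⟨c1, c2, c3, c4⟩ := hex.choose_spec
    exact penrose_unique Q _ X₀ c1 c2 c3 c4 e1 e2 e3 e4
  -- symmetry of X₀
  have hBt : Bᵀ = B := by
    have := hBpd.1
    rwa [← conjTranspose_eq_transpose_of_trivial]
  have hXt : X₀ᵀ = X₀ := by
    rw [hX₀, transpose_sub, transpose_nonsing_inv, hBt, hKt]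
  -- positivity of X₀ on the hyperplane
  have hBipd : B⁻¹.PosDef := hBpd.inv
  have hXquad : ∀ x : Fin n → ℝ, (∑ i, x i) = 0 → x ≠ 0 → 0 < x ⬝ᵥ X₀ *ᵥ x := by
    intro x hs hx
    have hstar : star x = x := by funext i; exact star_trivial _
    have hK0 : K *ᵥ x = 0 := by
      rw [hKmulVec, hs]
      funext i
      simp only [mul_zero]
      rfl
    rw [hX₀, sub_mulVec, dotProduct_sub, hK0, dotProduct_zero, sub_zero]
    have := hBipd.dotProduct_mulVec_pos hx
    rwa [hstar] at this
  -- negativity of Ω on the hyperplane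
  have hΩneg : ∀ x : Fin n → ℝ, (∑ i, x i) = 0 → x ≠ 0 → x ⬝ᵥ Ω *ᵥ x < 0 := by
    intro x hs hx
    have h1 : x ⬝ᵥ (Matrix.of (fun _ j => ζ j) : Matrix (Fin n) (Fin n) ℝ) *ᵥ x = 0 := by
      simp only [dotProduct, mulVec, of_apply]
      rw [← Finset.sum_mul, hs, zero_mul]
    have h2 : x ⬝ᵥ (Matrix.of (fun i _ => ζ i) : Matrix (Fin n) (Fin n) ℝ) *ᵥ x = 0 := by
      simp only [dotProduct, mulVec, of_apply]
      have hz : ∀ i : Fin n, (fun j => ζ i) ⬝ᵥ x = 0 := by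
        intro i
        simp only [dotProduct]
        rw [← Finset.mul_sum, hs, mul_zero]
      calc ∑ i, x i * ((fun j => ζ i) ⬝ᵥ x) = ∑ i, x i * 0 := by
            exact Finset.sum_congr rfl fun i _ => by rw [hz i]
      _ = 0 := by simp
    have h3 : 0 < x ⬝ᵥ (pinv Q) *ᵥ x := by rw [hpinv]; exact hXquad x hs hx
    rw [hΩ, sub_mulVec, add_mulVec, dotProduct_sub, dotProduct_add, h1, h2,
      two_smul, add_mulVec, dotProduct_add]
    linarith
  -- diagonal of Ω is zero
  have hdiagΩ : ∀ i, Ω i i = 0 := by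
    intro i
    rw [hΩ]
    simp only [Matrix.sub_apply, Matrix.add_apply, of_apply, Matrix.smul_apply, smul_eq_mul, hζ, two_smul]
    ring
  -- Ω is symmetric
  have hΩherm : Ω.IsHermitian := by
    have hpt : (pinv Q)ᵀ = pinv Q := by rw [hpinv, hXt]
    rw [IsHermitian, conjTranspose_eq_transpose_of_trivial, hΩ]
    rw [transpose_sub, transpose_add, transpose_smul]
    congr 1
    · rw [add_comm]
      congr 1
    · rw [hpt]
  -- main eigenvalue counting
  have key : ∀ hH : Ω.IsHermitian,
      (Finset.univ.filter fun i => 0 < hH.eigenvalues i).card = 1 ∧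
      (Finset.univ.filter fun i => hH.eigenvalues i < 0).card = n - 1 ∧
      ∀ i, hH.eigenvalues i ≠ 0 := by
    intro hH
    set lam := hH.eigenvalues with hlam
    set U : Matrix (Fin n) (Fin n) ℝ := (hH.eigenvectorUnitary : Matrix (Fin n) (Fin n) ℝ)
      with hU
    have hUmem := hH.eigenvectorUnitary.prop
    have hU1 : star U * U = 1 := (Unitary.mem_iff.mp hUmem).1
    have hUst : star U = Uᵀ := by
      rw [star_eq_conjTranspose, conjTranspose_eq_transpose_of_trivial]
    have hcoe : (RCLike.ofReal ∘ lam : Fin n → ℝ) = lam := by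
      funext i; simp [RCLike.ofReal_real_eq_id]
    have hspec : Ω = U * diagonal lam * star U := by
      have := hH.spectral_theorem
      rwa [hcoe] at this
    -- trace identity
    have htrace : ∑ i, lam i = 0 := by
      have ht1 : Ω.trace = 0 := by
        rw [trace]
        simp only [diag]
        rw [Finset.sum_congr rfl (fun i _ => hdiagΩ i), Finset.sum_const_zero]
      have ht2 : Ω.trace = ∑ i, lam i := by
        rw [hspec, trace_mul_cycle, hU1, one_mul, trace_diagonal]
      rw [← ht2, ht1]
    -- quadratic form in eigencoordinates
    have hquad : ∀ y : Fin n → ℝ,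
        (U *ᵥ y) ⬝ᵥ Ω *ᵥ (U *ᵥ y) = ∑ i, lam i * (y i * y i) := by
      intro y
      have hmv : Ω *ᵥ (U *ᵥ y) = (U * diagonal lam) *ᵥ y := by
        rw [hspec, mulVec_mulVec, mul_assoc, hU1, mul_one]
      have h5 : (U *ᵥ y) ᵥ* U = y := by
        calc (U *ᵥ y) ᵥ* U = Uᵀ *ᵥ (U *ᵥ y) := by rw [mulVec_transpose]
        _ = (Uᵀ * U) *ᵥ y := by rw [mulVec_mulVec]
        _ = y := by rw [← hUst, hU1, one_mulVec]
      have hUy : (U *ᵥ y) ᵥ* (U * diagonal lam) = y ᵥ* diagonal lam := by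
        rw [← vecMul_vecMul, h5]
      rw [hmv, dotProduct_mulVec, hUy]
      simp only [dotProduct, vecMul_diagonal]
      exact Finset.sum_congr rfl fun i _ => by ring
    -- the column sums of U
    set w : Fin n → ℝ := fun j => ∑ i, U i j with hw
    have hsumU : ∀ y : Fin n → ℝ, ∑ i, (U *ᵥ y) i = w ⬝ᵥ y := by
      intro y
      simp only [mulVec, dotProduct, hw, Finset.sum_mul]
      rw [Finset.sum_comm]
    -- at most one nonnegative eigenvalue
    have hS1 : (Finset.univ.filter fun i => 0 ≤ lam i).card ≤ 1 := by
      by_contra hcon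
      push_neg at hcon
      obtain ⟨i, hi, j, hj, hij⟩ := Finset.one_lt_card.mp hcon
      rw [Finset.mem_filter] at hi hj
      obtain ⟨a, b, hab0, hw0⟩ : ∃ a b : ℝ, ¬(a = 0 ∧ b = 0) ∧ w i * a + w j * b = 0 := by
        by_cases hwi : w i = 0
        · exact ⟨1, 0, by simp, by simp [hwi]⟩
        · exact ⟨w j, -w i, fun h => hwi (by simpa using h.2), by ring⟩
      set y : Fin n → ℝ := fun k => if k = i then a else if k = j then b else 0 with hy
      have hyi : y i = a := by simp [hy]
      have hyj : y j = b := by simp [hy, hij.symm]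
      have hyoff : ∀ k, k ≠ i → k ≠ j → y k = 0 := by
        intro k h1 h2; simp [hy, h1, h2]
      have hyne : y ≠ 0 := by
        intro h0
        apply hab0
        constructor
        · rw [← hyi, h0]; rfl
        · rw [← hyj, h0]; rfl
      set x : Fin n → ℝ := U *ᵥ y with hx
      have hxne : x ≠ 0 := by
        intro h0
        apply hyne
        have : (star U * U) *ᵥ y = star U *ᵥ (U *ᵥ y) := (mulVec_mulVec _ _ _).symm
        rw [hU1, one_mulVec, ← hx, h0, mulVec_zero] at this
        exact this
      have hxs : ∑ k, x k = 0 := by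
        rw [hx, hsumU]
        have : w ⬝ᵥ y = w i * a + w j * b := by
          rw [dotProduct, sum_two_support (fun k => w k * y k) i j hij
            (fun k h1 h2 => by show w k * y k = 0; rw [hyoff k h1 h2, mul_zero]), hyi, hyj]
        rw [this, hw0]
      have hneg := hΩneg x hxs hxne
      have hpos : 0 ≤ x ⬝ᵥ Ω *ᵥ x := by
        rw [hx, hquad]
        rw [sum_two_support (fun k => lam k * (y k * y k)) i j hij
          (fun k h1 h2 => by show lam k * (y k * y k) = 0; rw [hyoff k h1 h2, mul_zero, mul_zero]), hyi, hyj]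
        have := hi.2; have := hj.2
        nlinarith [mul_self_nonneg a, mul_self_nonneg b]
      linarith
    -- the cardinality bookkeeping
    have hsplit : (Finset.univ.filter fun i => 0 ≤ lam i).card
        + (Finset.univ.filter fun i => lam i < 0).card = n := by
      have := Finset.card_filter_add_card_filter_not
        (s := (Finset.univ : Finset (Fin n))) (p := fun i => 0 ≤ lam i)
      simp only [not_le] at this
      simpa using this
    have hNpos : ∃ i, lam i < 0 := by
      have hcard : 0 < (Finset.univ.filter fun i => lam i < 0).card := by omega
      obtain ⟨i, hi⟩ := Finset.card_pos.mp hcard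
      exact ⟨i, (Finset.mem_filter.mp hi).2⟩
    have hPpos : ∃ i, 0 < lam i := by
      by_contra hcon
      push_neg at hcon
      obtain ⟨i0, hi0⟩ := hNpos
      have : ∑ i, lam i < ∑ i : Fin n, (0:ℝ) :=
        Finset.sum_lt_sum (fun i _ => hcon i) ⟨i0, Finset.mem_univ i0, hi0⟩
      rw [htrace] at this
      simp at this
    obtain ⟨ip, hip⟩ := hPpos
    have hPsubS : (Finset.univ.filter fun i => 0 < lam i)
        ⊆ (Finset.univ.filter fun i => 0 ≤ lam i) := by
      intro k hk
      rw [Finset.mem_filter] at hk ⊢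
      exact ⟨hk.1, le_of_lt hk.2⟩
    have hP1 : (Finset.univ.filter fun i => 0 < lam i).card = 1 := by
      have hle : (Finset.univ.filter fun i => 0 < lam i).card ≤ 1 :=
        le_trans (Finset.card_le_card hPsubS) hS1
      have hge : 1 ≤ (Finset.univ.filter fun i => 0 < lam i).card := by
        apply Finset.card_pos.mpr
        exact ⟨ip, Finset.mem_filter.mpr ⟨Finset.mem_univ ip, hip⟩⟩
      omega
    have hScard : (Finset.univ.filter fun i => 0 ≤ lam i).card = 1 := by
      have hge : 1 ≤ (Finset.univ.filter fun i => 0 ≤ lam i).card := by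
        apply Finset.card_pos.mpr
        exact ⟨ip, Finset.mem_filter.mpr ⟨Finset.mem_univ ip, le_of_lt hip⟩⟩
      omega
    refine ⟨hP1, by omega, ?_⟩
    intro i hi0
    obtain ⟨a, ha⟩ := Finset.card_eq_one.mp hScard
    have hiS : i ∈ (Finset.univ.filter fun i => 0 ≤ lam i) :=
      Finset.mem_filter.mpr ⟨Finset.mem_univ i, le_of_eq hi0.symm⟩
    have hipS : ip ∈ (Finset.univ.filter fun i => 0 ≤ lam i) :=
      Finset.mem_filter.mpr ⟨Finset.mem_univ ip, le_of_lt hip⟩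
    rw [ha, Finset.mem_singleton] at hiS hipS
    rw [hiS, ← hipS] at hi0
    exact (ne_of_gt hip) hi0
  refine ⟨?_, fun hH => ⟨(key hH).1, (key hH).2.1⟩⟩
  obtain ⟨-, -, hne⟩ := key hΩherm
  have hdet : Ω.det = ∏ i, hΩherm.eigenvalues i := by
    have := hΩherm.det_eq_prod_eigenvalues
    simpa using this
  rw [hdet]
  exact isUnit_iff_ne_zero.mpr (Finset.prod_ne_zero_iff.mpr (fun i _ => hne i))
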